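/- Let G be a triangle-free graph with maximum degree at most 3 and vertex weights a*, d*: V(G) → {0,1}. Then (G, a*, d*) admits a solution to (1,1)-Cluster Editing if and only if there exists a matching D of deletable edges of G such that every connected component C of G − D is isomorphic to P₁, P₂, P₃, or C₄, and moreover: if C ≅ P₃ then the two endpoints u, w of the path are non-adjacent in G and satisfy a*(u)=a*(w)=1; and if C ≅ C₄ then both chords of the cycle are non-edges of G whose endpoints all have a*-value 1. -/

import Mathlib

open SimpleGraph

variable {V : Type*}

/-- A graph whose edge set is a matching: every vertex has at most one neighbour. -/
def IsMatchingGraph (M : SimpleGraph V) : Prop :=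
  ∀ ⦃v w w' : V⦄, M.Adj v w → M.Adj v w' → w = w'

/-- A cluster graph: every connected component is a complete graph. -/
def IsClusterGraph (G : SimpleGraph V) : Prop :=
  ∀ ⦃u v w : V⦄, G.Adj u v → G.Adj v w → u ≠ w → G.Adj u w

/-- No `C₃` (triangle) subgraph. -/
def TriangleFree (G : SimpleGraph V) : Prop :=
  ∀ ⦃u v w : V⦄, G.Adj u v → G.Adj v w → G.Adj u w → False

/-- No `C₄` subgraph. -/
def C4Free (G : SimpleGraph V) : Prop :=
  ∀ ⦃p q r s : V⦄, p ≠ r → q ≠ s →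
    G.Adj p q → G.Adj q r → G.Adj r s → G.Adj s p → False

/-- Degree of a vertex (as the cardinality of its neighbourhood). -/
noncomputable def ndeg (G : SimpleGraph V) (v : V) : ℕ := {w | G.Adj v w}.ncard

/-- Maximum degree at most `n`. -/
def MaxDegLE (G : SimpleGraph V) (n : ℕ) : Prop := ∀ v, ndeg G v ≤ n

/-- `D` is a matching of deletable edges of `G` (w.r.t. weights `d`). -/
def DelMatching (G D : SimpleGraph V) (d : V → ℕ) : Prop :=
  D ≤ G ∧ IsMatchingGraph D ∧ ∀ ⦃u v : V⦄, D.Adj u v → d u = 1 ∧ d v = 1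

/-- `A` is a matching of addable edges of the complement of `G` (w.r.t. weights `a`). -/
def AddMatching (G A : SimpleGraph V) (a : V → ℕ) : Prop :=
  A ≤ Gᶜ ∧ IsMatchingGraph A ∧ ∀ ⦃u v : V⦄, A.Adj u v → a u = 1 ∧ a v = 1

/-- `(G, a, d)` is a YES-instance of `(1,1)`-Cluster Editing (matching formulation). -/
def HasSolution (G : SimpleGraph V) (a d : V → ℕ) : Prop :=
  ∃ D A : SimpleGraph V, DelMatching G D d ∧ AddMatching G A a ∧
    IsClusterGraph ((G \ D) ⊔ A)

/-- The component `c` of `H` is a `P₁` (single vertex). -/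
def P1Comp (H : SimpleGraph V) (c : H.ConnectedComponent) : Prop :=
  ∃ v : V, c.supp = {v}

/-- The component `c` of `H` is a `P₂` (a single edge). -/
def P2Comp (H : SimpleGraph V) (c : H.ConnectedComponent) : Prop :=
  ∃ u v : V, H.Adj u v ∧ c.supp = {u, v}

/-- The component `c` of `H` is a path `u - m - w` on three vertices. -/
def P3Comp (H : SimpleGraph V) (c : H.ConnectedComponent) (u m w : V) : Prop :=
  H.Adj u m ∧ H.Adj m w ∧ u ≠ w ∧ ¬ H.Adj u w ∧ c.supp = {u, m, w}

/-- The component `c` of `H` is a chordless cycle `p - q - r - s - p` on four vertices. -/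
def C4Comp (H : SimpleGraph V) (c : H.ConnectedComponent) (p q r s : V) : Prop :=
  H.Adj p q ∧ H.Adj q r ∧ H.Adj r s ∧ H.Adj s p ∧ p ≠ r ∧ q ≠ s ∧
    ¬ H.Adj p r ∧ ¬ H.Adj q s ∧ c.supp = {p, q, r, s}

/-- Every connected component of `H` is isomorphic to `P₁`, `P₂`, `P₃` or `C₄`. -/
def GoodComponents (H : SimpleGraph V) : Prop :=
  ∀ c : H.ConnectedComponent,
    P1Comp H c ∨ P2Comp H c ∨ (∃ u m w, P3Comp H c u m w) ∨
      (∃ p q r s, C4Comp H c p q r s)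

/-- `G` contains `K_{2,3}` as a subgraph. -/
def ContainsK23 (G : SimpleGraph V) : Prop :=
  ∃ x₁ x₂ y₁ y₂ y₃ : V, x₁ ≠ x₂ ∧ y₁ ≠ y₂ ∧ y₁ ≠ y₃ ∧ y₂ ≠ y₃ ∧
    G.Adj x₁ y₁ ∧ G.Adj x₁ y₂ ∧ G.Adj x₁ y₃ ∧ G.Adj x₂ y₁ ∧ G.Adj x₂ y₂ ∧ G.Adj x₂ y₃

lemma cluster_reachable_adj {H : SimpleGraph V} (hH : IsClusterGraph H)
    {u v : V} (h : H.Reachable u v) : u = v ∨ H.Adj u v := by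
  obtain ⟨p⟩ := h
  induction p with
  | nil => exact Or.inl rfl
  | @cons a b c h' p ih =>
    rcases ih with rfl | hadj
    · exact Or.inr h'
    · rcases eq_or_ne a c with rfl | hne
      · exact Or.inl rfl
      · exact Or.inr (hH h' hadj hne)

lemma walk_mem_closed {G' : SimpleGraph V} {S : Set V}
    (hcl : ∀ a ∈ S, ∀ b, G'.Adj a b → b ∈ S) :
    ∀ {a b : V}, G'.Walk a b → a ∈ S → b ∈ S := by
  intro a b p
  induction p with
  | nil => exact id
  | cons h' p ih => intro ha; exact ih (hcl _ ha _ h')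

lemma supp_eq_of {G' : SimpleGraph V} {c : G'.ConnectedComponent} {v : V}
    (hv : G'.connectedComponentMk v = c) (S : Set V) (hvS : v ∈ S)
    (hcl : ∀ a ∈ S, ∀ b, G'.Adj a b → b ∈ S)
    (hre : ∀ s ∈ S, G'.Reachable v s) : c.supp = S := by
  ext u
  simp only [ConnectedComponent.mem_supp_iff]
  constructor
  · intro hu
    have hr : G'.Reachable v u := ConnectedComponent.eq.mp (hv.trans hu.symm)
    obtain ⟨p⟩ := hr
    exact walk_mem_closed hcl p hvS
  · intro hu
    exact ((ConnectedComponent.sound (hre u hu)).symm.trans hv)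

lemma tri_false {G' A H : SimpleGraph V}
    (hT' : TriangleFree G')
    (hdec : ∀ ⦃x y⦄, H.Adj x y → G'.Adj x y ∨ A.Adj x y)
    {a b c : V} (hab : H.Adj a b) (hbc : H.Adj b c) (hac : H.Adj a c)
    (nab : ¬ A.Adj a b) (nbc : ¬ A.Adj b c) (nac : ¬ A.Adj a c) : False := by
  rcases hdec hab with g1 | g1; swap; · exact nab g1
  rcases hdec hbc with g2 | g2; swap; · exact nbc g2
  rcases hdec hac with g3 | g3; swap; · exact nac g3
  exact hT' g1 g2 g3

lemma noA3 {G' A H : SimpleGraph V}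
    (hT' : TriangleFree G') (hAm : IsMatchingGraph A)
    (hdec : ∀ ⦃x y⦄, H.Adj x y → G'.Adj x y ∨ A.Adj x y)
    {v a b c : V} (hbc : b ≠ c)
    (hva : H.Adj v a) (hvb : H.Adj v b) (hvc : H.Adj v c)
    (hab : H.Adj a b) (hac : H.Adj a c)
    (nva : ¬ A.Adj v a) (nvb : ¬ A.Adj v b) (nvc : ¬ A.Adj v c) : False := by
  by_cases h : A.Adj a b
  · have nac : ¬ A.Adj a c := fun h' => hbc (hAm h h')
    exact tri_false hT' hdec hva hac hvc nva nac nvc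
  · exact tri_false hT' hdec hva hab hvb nva h nvb

lemma no_five {G' A H : SimpleGraph V}
    (hT' : TriangleFree G') (hAm : IsMatchingGraph A)
    (hdec : ∀ ⦃x y⦄, H.Adj x y → G'.Adj x y ∨ A.Adj x y)
    {v w x y z : V}
    (hwx : w ≠ x) (hwy : w ≠ y) (hwz : w ≠ z) (hxy : x ≠ y) (hxz : x ≠ z) (hyz : y ≠ z)
    (avw : H.Adj v w) (avx : H.Adj v x) (avy : H.Adj v y) (avz : H.Adj v z)
    (awx : H.Adj w x) (awy : H.Adj w y) (awz : H.Adj w z)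
    (axy : H.Adj x y) (axz : H.Adj x z) (ayz : H.Adj y z) : False := by
  by_cases h1 : A.Adj v w
  · exact noA3 hT' hAm hdec hyz avx avy avz axy axz
      (fun h' => hwx (hAm h1 h')) (fun h' => hwy (hAm h1 h')) (fun h' => hwz (hAm h1 h'))
  by_cases h2 : A.Adj v x
  · exact noA3 hT' hAm hdec hyz avw avy avz awy awz h1
      (fun h' => hxy (hAm h2 h')) (fun h' => hxz (hAm h2 h'))
  by_cases h3 : A.Adj v y
  · exact noA3 hT' hAm hdec hxz avw avx avz awx awz h1 h2
      (fun h' => hyz (hAm h3 h'))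
  · exact noA3 hT' hAm hdec hxy avw avx avy awx awy h1 h2 h3

lemma four_clique {G' A H : SimpleGraph V}
    (hT' : TriangleFree G') (hAm : IsMatchingGraph A)
    (hdec : ∀ ⦃x y⦄, H.Adj x y → G'.Adj x y ∨ A.Adj x y)
    {p r q s : V} (hpr : A.Adj p r)
    (hpq : p ≠ q) (hps : p ≠ s) (hrq : r ≠ q) (hrs : r ≠ s)
    (apq : H.Adj p q) (aps : H.Adj p s) (arq : H.Adj r q) (ars : H.Adj r s)
    (aqs : H.Adj q s) :
    A.Adj q s ∧ G'.Adj p q ∧ G'.Adj q r ∧ G'.Adj r s ∧ G'.Adj s p := by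
  have hqs : A.Adj q s := by
    by_contra hn
    refine tri_false hT' hdec apq aqs aps ?_ hn ?_
    · exact fun h' => hrq (hAm hpr h')
    · exact fun h' => hrs (hAm hpr h')
  have gpq : G'.Adj p q := by
    rcases hdec apq with g | h
    · exact g
    · exact absurd (hAm hpr h) hrq
  have gps : G'.Adj p s := by
    rcases hdec aps with g | h
    · exact g
    · exact absurd (hAm hpr h) hrs
  have grq : G'.Adj r q := by
    rcases hdec arq with g | h
    · exact g
    · exact absurd (hAm hpr.symm h) hpq
  have grs : G'.Adj r s := by
    rcases hdec ars with g | h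
    · exact g
    · exact absurd (hAm hpr.symm h) hps
  exact ⟨hqs, gpq, grq.symm, grs, gps.symm⟩

private lemma forward_aux {V : Type*} {G A D : SimpleGraph V} {a : V → ℕ}
    (hT : TriangleFree G) (hAc : A ≤ Gᶜ) (hAm : IsMatchingGraph A)
    (hAa : ∀ ⦃u v : V⦄, A.Adj u v → a u = 1 ∧ a v = 1)
    (hcluster : IsClusterGraph ((G \ D) ⊔ A)) :
    ∀ c : (G \ D).ConnectedComponent,
      P1Comp (G \ D) c ∨ P2Comp (G \ D) c ∨
      (∃ u m w, P3Comp (G \ D) c u m w ∧ ¬ G.Adj u w ∧ a u = 1 ∧ a w = 1) ∨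
      (∃ p q r s, C4Comp (G \ D) c p q r s ∧ ¬ G.Adj p r ∧ ¬ G.Adj q s ∧
        a p = 1 ∧ a q = 1 ∧ a r = 1 ∧ a s = 1) := by
  set G' := G \ D with hG'def
  set H := G' ⊔ A with hHdef
  intro c
  have hG'G : G' ≤ G := sdiff_le
  have hT' : TriangleFree G' := fun u v w h1 h2 h3 => hT (hG'G h1) (hG'G h2) (hG'G h3)
  have hdec : ∀ ⦃x y⦄, H.Adj x y → G'.Adj x y ∨ A.Adj x y := fun _ _ h => h
  have hAnG : ∀ ⦃x y⦄, A.Adj x y → ¬ G.Adj x y := fun _ _ h => ((compl_adj _ _ _).mp (hAc h)).2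
  have hAnG' : ∀ ⦃x y⦄, A.Adj x y → ¬ G'.Adj x y := fun x y h hg => hAnG h (hG'G hg)
  have hG'H : G' ≤ H := le_sup_left
  obtain ⟨v, hv⟩ := c.exists_rep
  have key : ∀ ⦃x y : V⦄, H.Adj v x → H.Adj v y → x ≠ y → H.Adj x y :=
    fun x y hx hy hne => hcluster hx.symm hy hne
  by_cases h1 : ∃ w, H.Adj v w
  swap
  · push_neg at h1
    left
    refine ⟨v, supp_eq_of hv {v} rfl ?_ ?_⟩
    · intro aa ha b hb
      rcases ha with rfl
      exact absurd (hG'H hb) (h1 b)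
    · intro s hs; rcases hs with rfl; exact Reachable.refl _
  obtain ⟨w, hw⟩ := h1
  by_cases h2 : ∃ x, H.Adj v x ∧ x ≠ w
  swap
  · push_neg at h2
    -- clique is {v, w}
    have hnb : ∀ ⦃aa b : V⦄, (aa = v ∨ aa = w) → H.Adj aa b → b = v ∨ b = w := by
      intro aa b ha hab
      rcases ha with rfl | rfl
      · exact Or.inr (h2 b hab)
      · by_cases hbv : b = v
        · exact Or.inl hbv
        · exact Or.inr (h2 b (hcluster hw hab (fun h => hbv h.symm)))
    by_cases hG : G'.Adj v w
    · right; left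
      refine ⟨v, w, hG, supp_eq_of hv {v, w} (Or.inl rfl) ?_ ?_⟩
      · intro aa ha b hb
        simp only [Set.mem_insert_iff, Set.mem_singleton_iff] at ha ⊢
        exact hnb ha (hG'H hb)
      · intro s hs
        simp only [Set.mem_insert_iff, Set.mem_singleton_iff] at hs
        rcases hs with rfl | rfl
        · exact Reachable.refl _
        · exact hG.reachable
    · left
      refine ⟨v, supp_eq_of hv {v} rfl ?_ ?_⟩
      · intro aa ha b hb
        rcases ha with rfl
        rcases hnb (Or.inl rfl) (hG'H hb) with rfl | rfl
        · exact absurd hb (fun h => h.ne rfl)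
        · exact absurd hb hG
      · intro s hs; rcases hs with rfl; exact Reachable.refl _
  obtain ⟨x, hx, hxw⟩ := h2
  have awx : H.Adj w x := key hw hx (Ne.symm hxw)
  by_cases h3 : ∃ y, H.Adj v y ∧ y ≠ w ∧ y ≠ x
  swap
  · push_neg at h3
    -- clique is {v, w, x}
    have hnb : ∀ ⦃aa b : V⦄, (aa = v ∨ aa = w ∨ aa = x) → H.Adj aa b →
        b = v ∨ b = w ∨ b = x := by
      intro aa b ha hab
      have main : ∀ b', H.Adj v b' → b' = v ∨ b' = w ∨ b' = x := by
        intro b' hb'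
        by_cases h : b' = w
        · exact Or.inr (Or.inl h)
        · exact Or.inr (Or.inr (h3 b' hb' h))
      rcases ha with rfl | rfl | rfl
      · exact main b hab
      · by_cases hbv : b = v
        · exact Or.inl hbv
        · exact main b (hcluster hw hab (fun h => hbv h.symm))
      · by_cases hbv : b = v
        · exact Or.inl hbv
        · exact main b (hcluster hx hab (fun h => hbv h.symm))
    have hA1 : A.Adj v w ∨ A.Adj w x ∨ A.Adj v x := by
      by_contra hn; push_neg at hn
      exact tri_false hT' hdec hw awx hx hn.1 hn.2.1 hn.2.2
    right; right; left
    have mksupp : ∀ (u₀ m₀ w₀ : V), ({u₀, m₀, w₀} : Set V) = {v, w, x} →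
        G'.Adj u₀ m₀ → G'.Adj m₀ w₀ → v ∈ ({u₀, m₀, w₀} : Set V) →
        c.supp = {u₀, m₀, w₀} := by
      intro u₀ m₀ w₀ hset g1 g2 hvmem
      refine supp_eq_of hv _ hvmem ?_ ?_
      · intro aa ha b hb
        rw [hset] at ha ⊢
        simp only [Set.mem_insert_iff, Set.mem_singleton_iff] at ha ⊢
        exact hnb ha (hG'H hb)
      · have r1 : G'.Reachable u₀ m₀ := g1.reachable
        have r2 : G'.Reachable u₀ w₀ := g1.reachable.trans g2.reachable
        intro s hs
        have hvm : v = u₀ ∨ v = m₀ ∨ v = w₀ := by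
          simpa only [Set.mem_insert_iff, Set.mem_singleton_iff] using hvmem
        simp only [Set.mem_insert_iff, Set.mem_singleton_iff] at hs
        have hvr : ∀ t, (t = u₀ ∨ t = m₀ ∨ t = w₀) → G'.Reachable u₀ t := by
          rintro t (rfl | rfl | rfl)
          · exact Reachable.refl _
          · exact r1
          · exact r2
        exact (hvr v hvm).symm.trans (hvr s hs)
    rcases hA1 with hA | hA | hA
    · -- middle x : path v - x - w
      have gvx : G'.Adj v x := by
        rcases hdec hx with g | h
        · exact g
        · exact absurd (hAm hA h) (Ne.symm hxw)
      have gxw : G'.Adj x w := by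
        rcases hdec awx with g | h
        · exact (g.symm)
        · exact absurd (hAm hA.symm h) hx.ne
      refine ⟨v, x, w, ⟨gvx, gxw, hw.ne, hAnG' hA, ?_⟩, hAnG hA, (hAa hA).1, (hAa hA).2⟩
      refine mksupp v x w ?_ gvx gxw (Or.inl rfl)
      · ext t; simp only [Set.mem_insert_iff, Set.mem_singleton_iff]; tauto
    · -- middle v : path w - v - x
      have gwv : G'.Adj w v := by
        rcases hdec hw.symm with g | h
        · exact g
        · exact absurd (hAm hA h) (Ne.symm hx.ne)
      have gvx : G'.Adj v x := by
        rcases hdec hx with g | h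
        · exact g
        · exact absurd (hAm hA.symm h.symm) hw.ne'
      refine ⟨w, v, x, ⟨gwv, gvx, Ne.symm hxw, hAnG' hA, ?_⟩,
        hAnG hA, (hAa hA).1, (hAa hA).2⟩
      refine mksupp w v x ?_ gwv gvx (Or.inr (Or.inl rfl))
      · ext t; simp only [Set.mem_insert_iff, Set.mem_singleton_iff]; tauto
    · -- middle w : path v - w - x
      have gvw : G'.Adj v w := by
        rcases hdec hw with g | h
        · exact g
        · exact absurd (hAm hA h) hxw
      have gwx : G'.Adj w x := by
        rcases hdec awx with g | h
        · exact g
        · exact absurd (hAm hA.symm h.symm) hw.ne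
      refine ⟨v, w, x, ⟨gvw, gwx, hx.ne, hAnG' hA, ?_⟩, hAnG hA, (hAa hA).1, (hAa hA).2⟩
      exact mksupp v w x rfl gvw gwx (Or.inl rfl)
  obtain ⟨y, hy, hyw, hyx⟩ := h3
  have awy : H.Adj w y := key hw hy (Ne.symm hyw)
  have axy : H.Adj x y := key hx hy (Ne.symm hyx)
  by_cases h4 : ∃ z, H.Adj v z ∧ z ≠ w ∧ z ≠ x ∧ z ≠ y
  · exfalso
    obtain ⟨z, hz, hzw, hzx, hzy⟩ := h4
    exact no_five hT' hAm hdec (Ne.symm hxw) (Ne.symm hyw) (fun h => hzw h.symm)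
      (Ne.symm hyx) (fun h => hzx h.symm) (fun h => hzy h.symm)
      hw hx hy hz awx awy (key hw hz (fun h => hzw h.symm))
      axy (key hx hz (fun h => hzx h.symm)) (key hy hz (fun h => hzy h.symm))
  push_neg at h4
  -- clique is {v, w, x, y}
  have hnb : ∀ ⦃aa b : V⦄, (aa = v ∨ aa = w ∨ aa = x ∨ aa = y) → H.Adj aa b →
      b = v ∨ b = w ∨ b = x ∨ b = y := by
    intro aa b ha hab
    have main : ∀ b', H.Adj v b' → b' = v ∨ b' = w ∨ b' = x ∨ b' = y := by
      intro b' hb'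
      by_cases h' : b' = w
      · exact Or.inr (Or.inl h')
      by_cases h'' : b' = x
      · exact Or.inr (Or.inr (Or.inl h''))
      · exact Or.inr (Or.inr (Or.inr (h4 b' hb' h' h'')))
    have step : ∀ b', H.Adj v aa → H.Adj aa b' → b' = v ∨ b' = w ∨ b' = x ∨ b' = y := by
      intro b' hva hab'
      by_cases hbv : b' = v
      · exact Or.inl hbv
      · exact main b' (hcluster hva hab' (fun h => hbv h.symm))
    rcases ha with rfl | rfl | rfl | rfl
    · exact main b hab
    · exact step b hw hab
    · exact step b hx hab
    · exact step b hy hab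
  right; right; right
  have hA1 : A.Adj v w ∨ A.Adj w x ∨ A.Adj v x := by
    by_contra hn; push_neg at hn
    exact tri_false hT' hdec hw awx hx hn.1 hn.2.1 hn.2.2
  have mksupp : ∀ (p₀ q₀ r₀ s₀ : V), ({p₀, q₀, r₀, s₀} : Set V) = {v, w, x, y} →
      G'.Adj p₀ q₀ → G'.Adj q₀ r₀ → G'.Adj r₀ s₀ → v ∈ ({p₀, q₀, r₀, s₀} : Set V) →
      c.supp = {p₀, q₀, r₀, s₀} := by
    intro p₀ q₀ r₀ s₀ hset g1 g2 g3 hvmem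
    refine supp_eq_of hv _ hvmem ?_ ?_
    · intro aa ha b hb
      rw [hset] at ha ⊢
      simp only [Set.mem_insert_iff, Set.mem_singleton_iff] at ha ⊢
      exact hnb ha (hG'H hb)
    · have r1 : G'.Reachable p₀ q₀ := g1.reachable
      have r2 : G'.Reachable p₀ r₀ := g1.reachable.trans g2.reachable
      have r3 : G'.Reachable p₀ s₀ := r2.trans g3.reachable
      intro s hs
      have hvm : v = p₀ ∨ v = q₀ ∨ v = r₀ ∨ v = s₀ := by
        simpa only [Set.mem_insert_iff, Set.mem_singleton_iff] using hvmem
      simp only [Set.mem_insert_iff, Set.mem_singleton_iff] at hs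
      have hvr : ∀ t, (t = p₀ ∨ t = q₀ ∨ t = r₀ ∨ t = s₀) → G'.Reachable p₀ t := by
        rintro t (rfl | rfl | rfl | rfl)
        · exact Reachable.refl _
        · exact r1
        · exact r2
        · exact r3
      exact (hvr v hvm).symm.trans (hvr s hs)
  rcases hA1 with hA | hA | hA
  · -- chords vw, xy ; cycle v-x-w-y
    obtain ⟨hA2, g1, g2, g3, g4⟩ := four_clique hT' hAm hdec hA hx.ne hy.ne
      (Ne.symm hxw) (Ne.symm hyw) hx hy awx awy axy
    -- hA2 : A.Adj x y, G'.Adj v x, G'.Adj x w, G'.Adj w y, G'.Adj y v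
    refine ⟨v, x, w, y, ⟨g1, g2, g3, g4, hw.ne, fun h => hyx h.symm, hAnG' hA, hAnG' hA2, ?_⟩,
      hAnG hA, hAnG hA2, (hAa hA).1, (hAa hA2).1, (hAa hA).2, (hAa hA2).2⟩
    refine mksupp v x w y ?_ g1 g2 g3 (Or.inl rfl)
    ext t; simp only [Set.mem_insert_iff, Set.mem_singleton_iff]; tauto
  · -- chords wx, vy ; cycle w-v-x-y
    obtain ⟨hA2, g1, g2, g3, g4⟩ := four_clique hT' hAm hdec hA hw.ne' (Ne.symm hyw)
      hx.ne' (Ne.symm hyx) hw.symm awy hx.symm axy hy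
    refine ⟨w, v, x, y, ⟨g1, g2, g3, g4, Ne.symm hxw, hy.ne, hAnG' hA, hAnG' hA2, ?_⟩,
      hAnG hA, hAnG hA2, (hAa hA).1, (hAa hA2).1, (hAa hA).2, (hAa hA2).2⟩
    refine mksupp w v x y ?_ g1 g2 g3 (Or.inr (Or.inl rfl))
    ext t; simp only [Set.mem_insert_iff, Set.mem_singleton_iff]; tauto
  · -- chords vx, wy ; cycle v-w-x-y
    obtain ⟨hA2, g1, g2, g3, g4⟩ := four_clique hT' hAm hdec hA hw.ne hy.ne
      hxw (Ne.symm hyx) hw hy awx.symm axy awy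
    refine ⟨v, w, x, y, ⟨g1, g2, g3, g4, hx.ne, Ne.symm hyw, hAnG' hA, hAnG' hA2, ?_⟩,
      hAnG hA, hAnG hA2, (hAa hA).1, (hAa hA2).1, (hAa hA).2, (hAa hA2).2⟩
    exact mksupp v w x y rfl g1 g2 g3 (Or.inl rfl)


private def auxA {V : Type*} (G' : SimpleGraph V) : SimpleGraph V where
  Adj x y := x ≠ y ∧ ¬ G'.Adj x y ∧ G'.connectedComponentMk x = G'.connectedComponentMk y
  symm := by constructor; rintro x y ⟨h1, h2, h3⟩; exact ⟨h1.symm, fun h => h2 h.symm, h3.symm⟩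
  loopless := by constructor; rintro x ⟨h1, -, -⟩; exact h1 rfl

private lemma backward_aux {V : Type*} {G D : SimpleGraph V} {a : V → ℕ}
    (hcomp : ∀ c : (G \ D).ConnectedComponent,
      P1Comp (G \ D) c ∨ P2Comp (G \ D) c ∨
      (∃ u m w, P3Comp (G \ D) c u m w ∧ ¬ G.Adj u w ∧ a u = 1 ∧ a w = 1) ∨
      (∃ p q r s, C4Comp (G \ D) c p q r s ∧ ¬ G.Adj p r ∧ ¬ G.Adj q s ∧
        a p = 1 ∧ a q = 1 ∧ a r = 1 ∧ a s = 1)) :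
    AddMatching G (auxA (G \ D)) a ∧ IsClusterGraph ((G \ D) ⊔ auxA (G \ D)) := by
  set G' := G \ D with hG'def
  have mem_of_mk : ∀ {t : V} {c : G'.ConnectedComponent},
      G'.connectedComponentMk t = c → t ∈ c.supp :=
    fun h => (ConnectedComponent.mem_supp_iff _ _).mpr h
  have pairkey : ∀ ⦃x y : V⦄, x ≠ y → ¬ G'.Adj x y →
      G'.connectedComponentMk x = G'.connectedComponentMk y →
      (¬ G.Adj x y ∧ a x = 1 ∧ a y = 1) ∧
      (∀ z, z ≠ x → ¬ G'.Adj x z →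
        G'.connectedComponentMk x = G'.connectedComponentMk z → z = y) := by
    intro x y hne hnadj hmk
    have hx : x ∈ (G'.connectedComponentMk x).supp := mem_of_mk rfl
    have hy : y ∈ (G'.connectedComponentMk x).supp := mem_of_mk hmk.symm
    rcases hcomp (G'.connectedComponentMk x) with ⟨z, hs⟩ | ⟨u, v0, hadj, hs⟩ |
      ⟨u, m, w, ⟨a1, a2, hne', hnadj', hs⟩, hnG, hau, haw⟩ |
      ⟨p, q, r, s, ⟨b1, b2, b3, b4, hpr, hqs, npr, nqs, hs⟩, hnGpr, hnGqs, hap, haq, har, has⟩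
    · rw [hs] at hx hy
      simp only [Set.mem_singleton_iff] at hx hy
      subst hx; subst hy
      exact absurd rfl hne
    · rw [hs] at hx hy
      simp only [Set.mem_insert_iff, Set.mem_singleton_iff] at hx hy
      rcases hx with rfl | rfl <;> rcases hy with rfl | rfl
      · exact absurd rfl hne
      · exact absurd hadj hnadj
      · exact absurd hadj.symm hnadj
      · exact absurd rfl hne
    · rw [hs] at hx hy
      simp only [Set.mem_insert_iff, Set.mem_singleton_iff] at hx hy
      rcases hx with rfl | rfl | rfl
      · have hyw : y = w := by
          rcases hy with rfl | rfl | rfl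
          · exact absurd rfl hne
          · exact absurd a1 hnadj
          · rfl
        subst hyw
        refine ⟨⟨hnG, hau, haw⟩, ?_⟩
        intro z hz hnz hmz
        have hzc : z ∈ (G'.connectedComponentMk x).supp := mem_of_mk hmz.symm
        rw [hs] at hzc
        simp only [Set.mem_insert_iff, Set.mem_singleton_iff] at hzc
        rcases hzc with rfl | rfl | rfl
        · exact absurd rfl hz
        · exact absurd a1 hnz
        · rfl
      · rcases hy with rfl | rfl | rfl
        · exact absurd a1.symm hnadj
        · exact absurd rfl hne
        · exact absurd a2 hnadj
      · have hyu : y = u := by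
          rcases hy with rfl | rfl | rfl
          · rfl
          · exact absurd a2.symm hnadj
          · exact absurd rfl hne
        subst hyu
        refine ⟨⟨fun h => hnG h.symm, haw, hau⟩, ?_⟩
        intro z hz hnz hmz
        have hzc : z ∈ (G'.connectedComponentMk x).supp := mem_of_mk hmz.symm
        rw [hs] at hzc
        simp only [Set.mem_insert_iff, Set.mem_singleton_iff] at hzc
        rcases hzc with rfl | rfl | rfl
        · rfl
        · exact absurd a2.symm hnz
        · exact absurd rfl hz
    · rw [hs] at hx hy
      simp only [Set.mem_insert_iff, Set.mem_singleton_iff] at hx hy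
      rcases hx with rfl | rfl | rfl | rfl
      · have hyr : y = r := by
          rcases hy with rfl | rfl | rfl | rfl
          · exact absurd rfl hne
          · exact absurd b1 hnadj
          · rfl
          · exact absurd b4.symm hnadj
        subst hyr
        refine ⟨⟨hnGpr, hap, har⟩, ?_⟩
        intro z hz hnz hmz
        have hzc : z ∈ (G'.connectedComponentMk x).supp := mem_of_mk hmz.symm
        rw [hs] at hzc
        simp only [Set.mem_insert_iff, Set.mem_singleton_iff] at hzc
        rcases hzc with rfl | rfl | rfl | rfl
        · exact absurd rfl hz
        · exact absurd b1 hnz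
        · rfl
        · exact absurd b4.symm hnz
      · have hys : y = s := by
          rcases hy with rfl | rfl | rfl | rfl
          · exact absurd b1.symm hnadj
          · exact absurd rfl hne
          · exact absurd b2 hnadj
          · rfl
        subst hys
        refine ⟨⟨hnGqs, haq, has⟩, ?_⟩
        intro z hz hnz hmz
        have hzc : z ∈ (G'.connectedComponentMk x).supp := mem_of_mk hmz.symm
        rw [hs] at hzc
        simp only [Set.mem_insert_iff, Set.mem_singleton_iff] at hzc
        rcases hzc with rfl | rfl | rfl | rfl
        · exact absurd b1.symm hnz
        · exact absurd rfl hz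
        · exact absurd b2 hnz
        · rfl
      · have hyp : y = p := by
          rcases hy with rfl | rfl | rfl | rfl
          · rfl
          · exact absurd b2.symm hnadj
          · exact absurd rfl hne
          · exact absurd b3 hnadj
        subst hyp
        refine ⟨⟨fun h => hnGpr h.symm, har, hap⟩, ?_⟩
        intro z hz hnz hmz
        have hzc : z ∈ (G'.connectedComponentMk x).supp := mem_of_mk hmz.symm
        rw [hs] at hzc
        simp only [Set.mem_insert_iff, Set.mem_singleton_iff] at hzc
        rcases hzc with rfl | rfl | rfl | rfl
        · rfl
        · exact absurd b2.symm hnz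
        · exact absurd rfl hz
        · exact absurd b3 hnz
      · have hyq : y = q := by
          rcases hy with rfl | rfl | rfl | rfl
          · exact absurd b4 hnadj
          · rfl
          · exact absurd b3.symm hnadj
          · exact absurd rfl hne
        subst hyq
        refine ⟨⟨fun h => hnGqs h.symm, has, haq⟩, ?_⟩
        intro z hz hnz hmz
        have hzc : z ∈ (G'.connectedComponentMk x).supp := mem_of_mk hmz.symm
        rw [hs] at hzc
        simp only [Set.mem_insert_iff, Set.mem_singleton_iff] at hzc
        rcases hzc with rfl | rfl | rfl | rfl
        · exact absurd b4 hnz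
        · rfl
        · exact absurd b3.symm hnz
        · exact absurd rfl hz
  have hAle : auxA G' ≤ Gᶜ := by
    rintro x y ⟨h1, h2, h3⟩
    rw [compl_adj]
    exact ⟨h1, ((pairkey h1 h2 h3).1).1⟩
  have hAmatch : IsMatchingGraph (auxA G') := by
    rintro v w1 w2 ⟨n1, g1, m1⟩ ⟨n2, g2, m2⟩
    exact ((pairkey n1 g1 m1).2 w2 (Ne.symm n2) g2 m2).symm ▸ rfl
  have hAa : ∀ ⦃u v : V⦄, (auxA G').Adj u v → a u = 1 ∧ a v = 1 := by
    rintro u v ⟨h1, h2, h3⟩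
    exact ⟨((pairkey h1 h2 h3).1).2.1, ((pairkey h1 h2 h3).1).2.2⟩
  have same : ∀ ⦃x y⦄, (G' ⊔ auxA G').Adj x y →
      G'.connectedComponentMk x = G'.connectedComponentMk y := by
    rintro x y (h | h)
    · exact ConnectedComponent.sound h.reachable
    · exact h.2.2
  have allpairs : ∀ ⦃x y : V⦄, x ≠ y →
      G'.connectedComponentMk x = G'.connectedComponentMk y → (G' ⊔ auxA G').Adj x y := by
    intro x y hne hmk
    have hx : x ∈ (G'.connectedComponentMk x).supp := mem_of_mk rfl
    have hy : y ∈ (G'.connectedComponentMk x).supp := mem_of_mk hmk.symm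
    have mkeq : ∀ t₁ t₂ : V, t₁ ∈ (G'.connectedComponentMk x).supp →
        t₂ ∈ (G'.connectedComponentMk x).supp →
        G'.connectedComponentMk t₁ = G'.connectedComponentMk t₂ := by
      intro t₁ t₂ h₁ h₂
      rw [ConnectedComponent.mem_supp_iff] at h₁ h₂
      rw [h₁, h₂]
    rcases hcomp (G'.connectedComponentMk x) with ⟨z, hs⟩ | ⟨u, v0, hadj, hs⟩ |
      ⟨u, m, w, ⟨a1, a2, hne', hnadj', hs⟩, -, -, -⟩ |
      ⟨p, q, r, s, ⟨b1, b2, b3, b4, hpr, hqs, npr, nqs, hs⟩, -, -, -, -, -, -⟩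
    · rw [hs] at hx hy
      simp only [Set.mem_singleton_iff] at hx hy
      subst hx; subst hy
      exact absurd rfl hne
    · rw [hs] at hx hy
      simp only [Set.mem_insert_iff, Set.mem_singleton_iff] at hx hy
      rcases hx with rfl | rfl <;> rcases hy with rfl | rfl
      · exact absurd rfl hne
      · exact Or.inl hadj
      · exact Or.inl hadj.symm
      · exact absurd rfl hne
    · have hmkuw : G'.connectedComponentMk u = G'.connectedComponentMk w :=
        mkeq u w (by rw [hs]; simp) (by rw [hs]; simp)
      rw [hs] at hx hy
      simp only [Set.mem_insert_iff, Set.mem_singleton_iff] at hx hy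
      rcases hx with rfl | rfl | rfl <;> rcases hy with rfl | rfl | rfl
      · exact absurd rfl hne
      · exact Or.inl a1
      · exact Or.inr ⟨hne', hnadj', hmkuw⟩
      · exact Or.inl a1.symm
      · exact absurd rfl hne
      · exact Or.inl a2
      · exact Or.inr ⟨Ne.symm hne', fun h => hnadj' h.symm, hmkuw.symm⟩
      · exact Or.inl a2.symm
      · exact absurd rfl hne
    · have hmkpr : G'.connectedComponentMk p = G'.connectedComponentMk r :=
        mkeq p r (by rw [hs]; simp) (by rw [hs]; simp)
      have hmkqs : G'.connectedComponentMk q = G'.connectedComponentMk s :=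
        mkeq q s (by rw [hs]; simp) (by rw [hs]; simp)
      rw [hs] at hx hy
      simp only [Set.mem_insert_iff, Set.mem_singleton_iff] at hx hy
      rcases hx with rfl | rfl | rfl | rfl <;> rcases hy with rfl | rfl | rfl | rfl
      · exact absurd rfl hne
      · exact Or.inl b1
      · exact Or.inr ⟨hpr, npr, hmkpr⟩
      · exact Or.inl b4.symm
      · exact Or.inl b1.symm
      · exact absurd rfl hne
      · exact Or.inl b2
      · exact Or.inr ⟨hqs, nqs, hmkqs⟩
      · exact Or.inr ⟨Ne.symm hpr, fun h => npr h.symm, hmkpr.symm⟩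
      · exact Or.inl b2.symm
      · exact absurd rfl hne
      · exact Or.inl b3
      · exact Or.inl b4
      · exact Or.inr ⟨Ne.symm hqs, fun h => nqs h.symm, hmkqs.symm⟩
      · exact Or.inl b3.symm
      · exact absurd rfl hne
  exact ⟨⟨hAle, hAmatch, hAa⟩, fun u v w h1 h2 hne => allpairs hne ((same h1).trans (same h2))⟩

/-- characterization of YES-instances for triangle-free graphs of
maximum degree at most 3. -/
theorem stmt_2 {V : Type*} [Fintype V] [DecidableEq V] (G : SimpleGraph V)
    (a d : V → ℕ) (ha : ∀ v, a v ≤ 1) (hd : ∀ v, d v ≤ 1)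
    (hT : TriangleFree G) (hdeg : MaxDegLE G 3) :
    HasSolution G a d ↔
      ∃ D : SimpleGraph V, DelMatching G D d ∧
        ∀ c : (G \ D).ConnectedComponent,
          P1Comp (G \ D) c ∨ P2Comp (G \ D) c ∨
          (∃ u m w, P3Comp (G \ D) c u m w ∧ ¬ G.Adj u w ∧ a u = 1 ∧ a w = 1) ∨
          (∃ p q r s, C4Comp (G \ D) c p q r s ∧ ¬ G.Adj p r ∧ ¬ G.Adj q s ∧
            a p = 1 ∧ a q = 1 ∧ a r = 1 ∧ a s = 1) := by
  constructor
  · rintro ⟨D, A, hDel, ⟨hAc, hAm, hAa⟩, hcl⟩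
    exact ⟨D, hDel, forward_aux hT hAc hAm hAa hcl⟩
  · rintro ⟨D, hDel, hcomp⟩
    obtain ⟨hAM, hcl⟩ := backward_aux hcomp
    exact ⟨D, auxA (G \ D), hDel, hAM, hcl⟩
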